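/- Let R = ℤ[t]/(t⁴ − t³ + t² − t + 1) with τ the image of t. If k₁, k₂, k₁′, k₂′ ∈ ℕ, i ∈ ℕ, ε ∈ {1, −1} and (1 + τ)^{k₁}·(1 − τ)^{k₂} = ε·τⁱ·(1 + τ)^{k₁′}·(1 − τ)^{k₂′} in R, then k₁ = k₁′ and k₂ = k₂′. -/

import Mathlib

open Polynomial in
/-- For any complex root `z` of `X⁴ - X³ + X² - X + 1`, the hypothesis of `stmt_10`
yields a linear relation among logs of `|1+z|`, `|1-z|`. -/
theorem stmt_10_aux (I : Ideal (Polynomial ℤ))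
    (hI : I = Ideal.span ({X ^ 4 - X ^ 3 + X ^ 2 - X + 1} : Set (Polynomial ℤ)))
    (τ : Polynomial ℤ ⧸ I) (hτ : τ = Ideal.Quotient.mk I X)
    (k₁ k₂ k₁' k₂' i : ℕ) (ε : Polynomial ℤ ⧸ I) (hε : ε = 1 ∨ ε = -1)
    (h : (1 + τ) ^ k₁ * (1 - τ) ^ k₂ = ε * τ ^ i * ((1 + τ) ^ k₁' * (1 - τ) ^ k₂'))
    (z : ℂ) (hz : z ^ 4 - z ^ 3 + z ^ 2 - z + 1 = 0) :
    (k₁ : ℝ) * Real.log (‖(1 + z)‖) + (k₂ : ℝ) * Real.log (‖(1 - z)‖)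
      = (k₁' : ℝ) * Real.log (‖(1 + z)‖)
        + (k₂' : ℝ) * Real.log (‖(1 - z)‖) := by
  have hz5 : z ^ 5 = -1 := by linear_combination (z + 1) * hz
  have habsz : ‖z‖ = 1 := by
    have h5 : ‖z‖ ^ 5 = 1 := by
      rw [← norm_pow, hz5]; simp
    nlinarith [norm_nonneg z, sq_nonneg (‖z‖ - 1),
      sq_nonneg (‖z‖ + 1), sq_nonneg (‖z‖ ^ 2 - 1),
      sq_nonneg (‖z‖ ^ 2 + ‖z‖)]
  have hne1 : (1 : ℂ) + z ≠ 0 := by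
    intro hc
    have : z = -1 := by linear_combination hc
    rw [this] at hz; norm_num at hz
  have hne2 : (1 : ℂ) - z ≠ 0 := by
    intro hc
    have : z = 1 := by linear_combination -hc
    rw [this] at hz; norm_num at hz
  -- build the ring hom
  set f : Polynomial ℤ →+* ℂ := eval₂RingHom (Int.castRingHom ℂ) z with hf
  have hf0 : ∀ a ∈ I, f a = 0 := by
    intro a ha
    rw [hI, Ideal.mem_span_singleton] at ha
    obtain ⟨c, rfl⟩ := ha
    rw [map_mul]
    have : f (X ^ 4 - X ^ 3 + X ^ 2 - X + 1) = 0 := by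
      simp only [hf, coe_eval₂RingHom, eval₂_add, eval₂_sub, eval₂_pow, eval₂_X, eval₂_one]
      linear_combination hz
    rw [this, zero_mul]
  set φ : (Polynomial ℤ ⧸ I) →+* ℂ := Ideal.Quotient.lift I f hf0 with hφ
  have hφτ : φ τ = z := by
    rw [hτ, hφ, Ideal.Quotient.lift_mk]
    simp [hf]
  have hc := congrArg φ h
  simp only [map_mul, map_pow, map_add, map_sub, map_one, hφτ] at hc
  have hφε : ‖(φ ε)‖ = 1 := by
    rcases hε with rfl | rfl <;> simp
  have habs := congrArg (‖·‖) hc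
  simp only [norm_mul, norm_pow, hφε, habsz, one_pow, one_mul] at habs
  -- habs : abs (1+z) ^ k₁ * abs (1-z) ^ k₂ = abs (1+z) ^ k₁' * abs (1-z) ^ k₂'
  have ha0 : ‖(1 + z)‖ ≠ 0 := norm_ne_zero_iff.mpr hne1
  have hb0 : ‖(1 - z)‖ ≠ 0 := norm_ne_zero_iff.mpr hne2
  have hlog := congrArg Real.log habs
  rw [Real.log_mul (pow_ne_zero _ ha0) (pow_ne_zero _ hb0),
    Real.log_mul (pow_ne_zero _ ha0) (pow_ne_zero _ hb0),
    Real.log_pow, Real.log_pow, Real.log_pow, Real.log_pow] at hlog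
  push_cast
  push_cast at hlog
  linarith

set_option maxHeartbeats 2000000 in
open Polynomial in
theorem stmt_10 (I : Ideal (Polynomial ℤ))
    (hI : I = Ideal.span ({X ^ 4 - X ^ 3 + X ^ 2 - X + 1} : Set (Polynomial ℤ)))
    (τ : Polynomial ℤ ⧸ I) (hτ : τ = Ideal.Quotient.mk I X)
    (k₁ k₂ k₁' k₂' i : ℕ) (ε : Polynomial ℤ ⧸ I) (hε : ε = 1 ∨ ε = -1)
    (h : (1 + τ) ^ k₁ * (1 - τ) ^ k₂ = ε * τ ^ i * ((1 + τ) ^ k₁' * (1 - τ) ^ k₂')) :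
    k₁ = k₁' ∧ k₂ = k₂' := by
  have hπ := Real.pi_pos
  -- the two roots exp(π/5 i) and exp(3π/5 i)
  have root : ∀ θ : ℝ, 0 < θ → θ < Real.pi → 5 * θ = Real.pi ∨ 5 * θ = 3 * Real.pi →
      (Complex.exp (θ * Complex.I)) ^ 4 - (Complex.exp (θ * Complex.I)) ^ 3
        + (Complex.exp (θ * Complex.I)) ^ 2 - Complex.exp (θ * Complex.I) + 1 = 0 := by
    intro θ hθ0 hθπ h5
    set z := Complex.exp (θ * Complex.I) with hzdef
    have hz5 : z ^ 5 = -1 := by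
      rw [hzdef, ← Complex.exp_nat_mul]
      rcases h5 with h5 | h5
      · have hc : ((θ : ℂ)) * 5 = ((Real.pi : ℝ) : ℂ) := by
          exact_mod_cast congrArg (Complex.ofReal) (by linarith : θ * 5 = Real.pi)
        have : ((5 : ℕ) : ℂ) * (θ * Complex.I) = (Real.pi : ℝ) * Complex.I := by
          push_cast
          linear_combination Complex.I * hc
        rw [this, Complex.exp_pi_mul_I]
      · have hc : ((θ : ℂ)) * 5 = ((Real.pi : ℝ) : ℂ) * 3 := by
          exact_mod_cast congrArg (Complex.ofReal) (by linarith : θ * 5 = Real.pi * 3)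
        have : ((5 : ℕ) : ℂ) * (θ * Complex.I) = (Real.pi : ℝ) * Complex.I
            + ((2 * Real.pi : ℝ) * Complex.I) := by
          push_cast
          linear_combination Complex.I * hc
        rw [this, Complex.exp_add, Complex.exp_pi_mul_I]
        simp [Complex.exp_two_pi_mul_I]
    have hzne : z ≠ -1 := by
      intro hc
      have him : z.im = Real.sin θ := Complex.exp_ofReal_mul_I_im θ
      rw [hc] at him
      have : Real.sin θ > 0 := Real.sin_pos_of_pos_of_lt_pi hθ0 hθπ
      simp at him
      linarith
    have hfac : (z + 1) * (z ^ 4 - z ^ 3 + z ^ 2 - z + 1) = 0 := by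
      linear_combination hz5
    rcases mul_eq_zero.mp hfac with hc | hc
    · exact absurd (by linear_combination hc) hzne
    · exact hc
  -- squared absolute values
  have absq : ∀ θ : ℝ, (‖(1 + Complex.exp (θ * Complex.I))‖) ^ 2
      = 2 + 2 * Real.cos θ ∧
      (‖(1 - Complex.exp (θ * Complex.I))‖) ^ 2 = 2 - 2 * Real.cos θ := by
    intro θ
    have hre : (Complex.exp (θ * Complex.I)).re = Real.cos θ := Complex.exp_ofReal_mul_I_re θ
    have him : (Complex.exp (θ * Complex.I)).im = Real.sin θ := Complex.exp_ofReal_mul_I_im θ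
    have hpyth := Real.sin_sq_add_cos_sq θ
    constructor
    · rw [Complex.sq_norm, Complex.normSq_apply]
      simp [Complex.add_re, Complex.add_im, hre, him]
      nlinarith
    · rw [Complex.sq_norm, Complex.normSq_apply]
      simp [Complex.sub_re, Complex.sub_im, hre, him]
      nlinarith
  set θ₁ : ℝ := Real.pi / 5 with hθ₁
  set θ₂ : ℝ := 3 * Real.pi / 5 with hθ₂
  have hroot₁ := root θ₁ (by positivity) (by rw [hθ₁]; linarith) (Or.inl (by rw [hθ₁]; ring))
  have hroot₂ := root θ₂ (by positivity) (by rw [hθ₂]; linarith) (Or.inr (by rw [hθ₂]; ring))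
  -- cos values bounds
  have hcos₁ : Real.cos θ₁ > 1 / 2 := by
    have := Real.cos_pi_div_three
    have h' : Real.cos (Real.pi / 3) < Real.cos θ₁ := by
      apply Real.cos_lt_cos_of_nonneg_of_le_pi (by positivity) (by linarith)
      rw [hθ₁]; linarith
    linarith
  have hcos₂lt : Real.cos θ₂ < 1 / 2 := by
    have := Real.cos_pi_div_three
    have h' : Real.cos θ₂ < Real.cos (Real.pi / 3) := by
      apply Real.cos_lt_cos_of_nonneg_of_le_pi (by positivity) (by rw [hθ₂]; linarith)
      rw [hθ₂]; linarith
    linarith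
  have hcos₂gt : Real.cos θ₂ > -(1 / 2) := by
    have h23 : Real.cos (2 * Real.pi / 3) = -(1 / 2) := by
      have : (2 : ℝ) * Real.pi / 3 = Real.pi - Real.pi / 3 := by ring
      rw [this, Real.cos_pi_sub, Real.cos_pi_div_three]
    have h' : Real.cos (2 * Real.pi / 3) < Real.cos θ₂ := by
      apply Real.cos_lt_cos_of_nonneg_of_le_pi (by rw [hθ₂]; positivity) (by linarith)
      rw [hθ₂]; linarith
    linarith
  -- abs bounds
  obtain ⟨hA1sq, hB1sq⟩ := absq θ₁
  obtain ⟨hA2sq, hB2sq⟩ := absq θ₂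
  set A := Real.log (‖(1 + Complex.exp (θ₁ * Complex.I))‖) with hA
  set B := Real.log (‖(1 - Complex.exp (θ₁ * Complex.I))‖) with hB
  set C := Real.log (‖(1 + Complex.exp (θ₂ * Complex.I))‖) with hC
  set D := Real.log (‖(1 - Complex.exp (θ₂ * Complex.I))‖) with hD
  have habsnn : ∀ w : ℂ, 0 ≤ ‖w‖ := fun w => norm_nonneg w
  have hcos₁lt1 : Real.cos θ₁ < 1 := by
    have h' : Real.cos θ₁ < Real.cos 0 := by
      apply Real.cos_lt_cos_of_nonneg_of_le_pi le_rfl (by rw [hθ₁]; linarith)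
      rw [hθ₁]; positivity
    rwa [Real.cos_zero] at h'
  have hApos : 0 < A := by
    apply Real.log_pos
    nlinarith [habsnn (1 + Complex.exp (θ₁ * Complex.I))]
  have hBneg : B < 0 := by
    apply Real.log_neg
    · nlinarith [habsnn (1 - Complex.exp (θ₁ * Complex.I))]
    · nlinarith [habsnn (1 - Complex.exp (θ₁ * Complex.I))]
  have hCpos : 0 < C := by
    apply Real.log_pos
    nlinarith [habsnn (1 + Complex.exp (θ₂ * Complex.I))]
  have hDpos : 0 < D := by
    apply Real.log_pos
    nlinarith [habsnn (1 - Complex.exp (θ₂ * Complex.I))]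
  have e₁ := stmt_10_aux I hI τ hτ k₁ k₂ k₁' k₂' i ε hε h _ hroot₁
  have e₂ := stmt_10_aux I hI τ hτ k₁ k₂ k₁' k₂' i ε hε h _ hroot₂
  rw [← hA, ← hB] at e₁
  rw [← hC, ← hD] at e₂
  set m : ℝ := (k₁ : ℝ) - (k₁' : ℝ) with hm
  set n : ℝ := (k₂ : ℝ) - (k₂' : ℝ) with hn
  have eq1 : m * A + n * B = 0 := by rw [hm, hn]; linarith
  have eq2 : m * C + n * D = 0 := by rw [hm, hn]; linarith
  have hmz : m = 0 := by
    have hdet : m * (A * D - C * B) = 0 := by linear_combination D * eq1 - B * eq2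
    have : A * D - C * B > 0 := by nlinarith
    rcases mul_eq_zero.mp hdet with h' | h'
    · exact h'
    · linarith
  have hnz : n = 0 := by
    rw [hmz, zero_mul, zero_add] at eq1
    rcases mul_eq_zero.mp eq1 with h' | h'
    · exact h'
    · linarith
  constructor
  · have : (k₁ : ℝ) = (k₁' : ℝ) := by rw [hm] at hmz; linarith
    exact_mod_cast this
  · have : (k₂ : ℝ) = (k₂' : ℝ) := by rw [hn] at hnz; linarith
    exact_mod_cast this
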